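/- Let S = {π₁, …, π_m} be a multiset of permutations in S_n, and let τ_i ∈ S_{2m} be the identity of [2m] with symbols 2i−1 and 2i swapped. Define S' = {π_i ∘ Δ_n(τ_i) : i ∈ [m]}, permutations of [n+2m]. Then for every integer k: there exists π* ∈ S_n with Σ_{π∈S} d_U(π*, π) ≤ k if and only if there exists π*' ∈ S_{n+2m} with Σ_{π'∈S'} d_U(π*', π') ≤ k + m. -/

import Mathlib

/-- Length of a longest common subsequence of two strings (lists over ℕ). -/
noncomputable def LCS (x y : List ℕ) : ℕ :=
  sSup {k | ∃ s : List ℕ, s.Sublist x ∧ s.Sublist y ∧ s.length = k}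

/-- Ulam distance between permutations, via `d_U(σ,τ) = |σ| − LCS(σ,τ)`. -/
noncomputable def ulamDist (x y : List ℕ) : ℕ := x.length - LCS x y

/-- `π` is a permutation of `[n] = {1,…,n}` viewed as a string. -/
def IsPermOf (n : ℕ) (π : List ℕ) : Prop := π.Perm (List.range' 1 n)

/-- `Δ_n(s)`: add `n` to every symbol of `s`. -/
def shift (n : ℕ) (s : List ℕ) : List ℕ := s.map (· + n)

lemma LCS_set_nonempty (x y : List ℕ) :
    {k | ∃ s : List ℕ, s.Sublist x ∧ s.Sublist y ∧ s.length = k}.Nonempty :=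
  ⟨0, [], List.nil_sublist x, List.nil_sublist y, rfl⟩

lemma LCS_set_bdd (x y : List ℕ) :
    BddAbove {k | ∃ s : List ℕ, s.Sublist x ∧ s.Sublist y ∧ s.length = k} :=
  ⟨x.length, fun k ⟨s, hs, _, hl⟩ => hl ▸ hs.length_le⟩

lemma LCS_spec (x y : List ℕ) :
    ∃ s : List ℕ, s.Sublist x ∧ s.Sublist y ∧ s.length = LCS x y :=
  Nat.sSup_mem (LCS_set_nonempty x y) (LCS_set_bdd x y)

lemma le_LCS {x y s : List ℕ} (hx : s.Sublist x) (hy : s.Sublist y) :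
    s.length ≤ LCS x y :=
  le_csSup (LCS_set_bdd x y) ⟨s, hx, hy, rfl⟩

lemma LCS_le_length_left (x y : List ℕ) : LCS x y ≤ x.length :=
  csSup_le (LCS_set_nonempty x y) (fun _ ⟨_, hs, _, hl⟩ => hl ▸ hs.length_le)

lemma LCS_le_length_right (x y : List ℕ) : LCS x y ≤ y.length :=
  csSup_le (LCS_set_nonempty x y) (fun _ ⟨_, _, hs, hl⟩ => hl ▸ hs.length_le)

lemma LCS_le_of_forall {x y : List ℕ} {c : ℕ}
    (h : ∀ s : List ℕ, s.Sublist x → s.Sublist y → s.length ≤ c) : LCS x y ≤ c :=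
  csSup_le (LCS_set_nonempty x y) (fun _ ⟨s, hx, hy, hl⟩ => hl ▸ h s hx hy)

/-- superadditivity under concatenation -/
lemma LCS_append_ge (x y u v : List ℕ) :
    LCS x y + LCS u v ≤ LCS (x ++ u) (y ++ v) := by
  obtain ⟨s, hsx, hsy, hsl⟩ := LCS_spec x y
  obtain ⟨t, htu, htv, htl⟩ := LCS_spec u v
  have := le_LCS (hsx.append htu) (hsy.append htv)
  simpa [hsl, htl] using this

/-- splitting by a predicate -/
lemma LCS_le_filter (x y : List ℕ) (p : ℕ → Bool) :
    LCS x y ≤ LCS (x.filter p) (y.filter p) +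
      LCS (x.filter (fun a => !p a)) (y.filter (fun a => !p a)) := by
  obtain ⟨s, hsx, hsy, hsl⟩ := LCS_spec x y
  have h1 := le_LCS (hsx.filter p) (hsy.filter p)
  have h2 := le_LCS (hsx.filter (fun a => !p a)) (hsy.filter (fun a => !p a))
  have := List.length_eq_length_filter_add (l := s) p
  omega

lemma LCS_shift (d : ℕ) (x y : List ℕ) : LCS (shift d x) (shift d y) = LCS x y := by
  have hinj : Function.Injective (· + d : ℕ → ℕ) := add_left_injective d
  apply le_antisymm
  · apply LCS_le_of_forall
    intro s hsx hsy
    rw [shift, List.sublist_map_iff] at hsx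
    obtain ⟨t, htx, rfl⟩ := hsx
    rw [shift] at hsy
    have hty : t.Sublist y := by
      rw [List.sublist_map_iff] at hsy
      obtain ⟨l', hl', heq⟩ := hsy
      rwa [List.map_injective_iff.2 hinj heq]
    simpa using le_LCS htx hty
  · obtain ⟨s, hsx, hsy, hsl⟩ := LCS_spec x y
    have := le_LCS (List.Sublist.map (· + d) hsx) (List.Sublist.map (· + d) hsy)
    simpa [shift, hsl] using this

lemma LCS_eq_length_iff {x y : List ℕ} (hl : x.length = y.length) :
    LCS x y = x.length ↔ x = y := by
  constructor
  · intro h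
    obtain ⟨s, hsx, hsy, hsl⟩ := LCS_spec x y
    have hx := hsx.eq_of_length (by omega)
    have hy := hsy.eq_of_length (by omega)
    rw [← hx, hy]
  · rintro rfl
    exact le_antisymm (LCS_le_length_left x x) (le_LCS (List.Sublist.refl x) (List.Sublist.refl x))

lemma range'_split (a b c : ℕ) :
    List.range' a (b + c) = List.range' a b ++ List.range' (a + b) c := by
  rw [Nat.add_comm b c, ← List.range'_append]
  simp
  omega

/-- splitting `range' 1 N` around two positions `u < v`. -/
lemma range'_split_pair {N u v : ℕ} (h1 : 1 ≤ u) (huv : u < v) (hvN : v ≤ N) :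
    List.range' 1 N =
      List.range' 1 (u-1) ++ [u] ++ List.range' (u+1) (v-u-1) ++ [v] ++
        List.range' (v+1) (N-v) := by
  have e1 : N = (u-1) + (1 + ((v-u-1) + (1 + (N-v)))) := by omega
  nth_rewrite 1 [e1]
  rw [range'_split, range'_split, range'_split, range'_split]
  have e2 : 1 + (u-1) = u := by omega
  have e3 : u + 1 + (v-u-1) = v := by omega
  rw [e2, List.range'_one, e3, List.range'_one]
  simp [List.append_assoc]

lemma filter_pair {N u v : ℕ} (h1 : 1 ≤ u) (huv : u < v) (hvN : v ≤ N) :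
    (List.range' 1 N).filter (fun x => x = u || x = v) = [u, v] := by
  rw [range'_split_pair h1 huv hvN]
  simp only [List.filter_append]
  have hnil : ∀ s l : ℕ, (∀ x ∈ List.range' s l, x ≠ u ∧ x ≠ v) →
      (List.range' s l).filter (fun x => x = u || x = v) = [] := by
    intro s l h
    rw [List.filter_eq_nil_iff]
    intro x hx
    obtain ⟨h1, h2⟩ := h x hx
    simp [h1, h2]
  rw [hnil 1 (u-1) (fun x hx => by rw [List.mem_range'_1] at hx; omega),
      hnil (u+1) (v-u-1) (fun x hx => by rw [List.mem_range'_1] at hx; omega),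
      hnil (v+1) (N-v) (fun x hx => by rw [List.mem_range'_1] at hx; omega)]
  simp

section Tau
variable (m : ℕ)

/-- the `i`-th swap permutation as a list -/
def tauL (m i : ℕ) : List ℕ :=
  (List.range' 1 (2*m)).map (Equiv.swap (2*i+1) (2*i+2))

lemma tauL_struct {m i : ℕ} (hi : i < m) :
    tauL m i = List.range' 1 (2*i) ++ [2*i+2, 2*i+1] ++
      List.range' (2*i+3) (2*m - (2*i+2)) := by
  have hsplit := range'_split_pair (N := 2*m) (u := 2*i+1) (v := 2*i+2)
    (by omega) (by omega) (by omega)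
  have h0 : (2*i+2) - (2*i+1) - 1 = 0 := by omega
  rw [h0] at hsplit
  simp only [List.range'_zero, List.append_nil] at hsplit
  have h1 : (2*i+1) - 1 = 2*i := by omega
  rw [h1] at hsplit
  rw [tauL, hsplit]
  simp only [List.map_append]
  have hfix : ∀ s l : ℕ, (∀ x ∈ List.range' s l, x ≠ 2*i+1 ∧ x ≠ 2*i+2) →
      (List.range' s l).map (Equiv.swap (2*i+1) (2*i+2)) = List.range' s l := by
    intro s l h
    apply List.map_congr_left ?_ |>.trans (List.map_id _)
    intro x hx
    obtain ⟨h1, h2⟩ := h x hx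
    exact Equiv.swap_apply_of_ne_of_ne h1 h2
  rw [hfix 1 (2*i) (fun x hx => by rw [List.mem_range'_1] at hx; omega),
      hfix (2*i+3) _ (fun x hx => by rw [List.mem_range'_1] at hx; omega)]
  simp [Equiv.swap_apply_left, Equiv.swap_apply_right]

lemma tauL_perm {m i : ℕ} (hi : i < m) : (tauL m i).Perm (List.range' 1 (2*m)) := by
  rw [tauL_struct hi]
  have hsplit := range'_split_pair (N := 2*m) (u := 2*i+1) (v := 2*i+2)
    (by omega) (by omega) (by omega)
  have h0 : (2*i+2) - (2*i+1) - 1 = 0 := by omega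
  rw [h0] at hsplit
  simp only [List.range'_zero, List.append_nil] at hsplit
  have h1 : (2*i+1) - 1 = 2*i := by omega
  rw [h1] at hsplit
  rw [hsplit]
  have : List.range' 1 (2*i) ++ [2*i+1] ++ [2*i+2] ++ List.range' (2*i+2+1) (2*m - (2*i+2))
      = List.range' 1 (2*i) ++ ((2*i+1) :: (2*i+2) :: List.range' (2*i+3) (2*m - (2*i+2))) := by
    simp
  rw [this]
  have : List.range' 1 (2*i) ++ [2*i+2, 2*i+1] ++ List.range' (2*i+3) (2*m - (2*i+2))
      = List.range' 1 (2*i) ++ ((2*i+2) :: (2*i+1) :: List.range' (2*i+3) (2*m - (2*i+2))) := by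
    simp
  rw [this]
  exact List.Perm.append_left _ (List.Perm.swap _ _ _)

lemma tauL_length {m i : ℕ} : (tauL m i).length = 2*m := by
  simp [tauL]

lemma tauL_filter_own {m i : ℕ} (hi : i < m) :
    (tauL m i).filter (fun x => x = 2*i+1 || x = 2*i+2) = [2*i+2, 2*i+1] := by
  rw [tauL_struct hi]
  simp only [List.filter_append]
  have hnil : ∀ s l : ℕ, (∀ x ∈ List.range' s l, x ≠ 2*i+1 ∧ x ≠ 2*i+2) →
      (List.range' s l).filter (fun x => x = 2*i+1 || x = 2*i+2) = [] := by
    intro s l h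
    rw [List.filter_eq_nil_iff]
    intro x hx
    obtain ⟨h1, h2⟩ := h x hx
    simp [h1, h2]
  rw [hnil 1 (2*i) (fun x hx => by rw [List.mem_range'_1] at hx; omega),
      hnil (2*i+3) _ (fun x hx => by rw [List.mem_range'_1] at hx; omega)]
  simp

lemma tauL_filter_other {m i j : ℕ} (hj : j < m) (hij : i ≠ j) :
    (tauL m i).filter (fun x => x = 2*j+1 || x = 2*j+2) = [2*j+1, 2*j+2] := by
  rw [tauL, List.filter_map]
  have hcomp : ((fun x => x = 2*j+1 || x = 2*j+2) ∘ (Equiv.swap (2*i+1) (2*i+2)))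
      = (fun x : ℕ => x = 2*j+1 || x = 2*j+2) := by
    funext x
    simp only [Function.comp_apply]
    have e1 : Equiv.swap (2*i+1) (2*i+2) x = 2*j+1 ↔ x = 2*j+1 := by
      rw [Equiv.swap_apply_eq_iff]
      rw [Equiv.swap_apply_of_ne_of_ne (by omega) (by omega)]
    have e2 : Equiv.swap (2*i+1) (2*i+2) x = 2*j+2 ↔ x = 2*j+2 := by
      rw [Equiv.swap_apply_eq_iff]
      rw [Equiv.swap_apply_of_ne_of_ne (by omega) (by omega)]
    simp [e1, e2]
  rw [hcomp, filter_pair (by omega) (by omega) (by omega)]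
  rw [List.map_cons, List.map_cons, List.map_nil,
    Equiv.swap_apply_of_ne_of_ne (by omega) (by omega),
    Equiv.swap_apply_of_ne_of_ne (by omega) (by omega)]

end Tau

lemma sub_pair {a b : ℕ} (hab : a ≠ b) {s : List ℕ}
    (h1 : s.Sublist [a,b]) (h2 : s.Sublist [b,a]) : s.length ≤ 1 := by
  by_contra h
  push_neg at h
  have l1 : s.length = 2 := le_antisymm (by simpa using h1.length_le) h
  have e1 := h1.eq_of_length (by simp [l1])
  have e2 := h2.eq_of_length (by simp [l1])
  rw [e1] at e2
  simp at e2
  omega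

lemma LCS_tauL_tauL {m i j : ℕ} (hi : i < m) (hj : j < m) (hij : i ≠ j) :
    LCS (tauL m i) (tauL m j) ≤ 2*m - 2 := by
  apply LCS_le_of_forall
  intro s hsi hsj
  set p : ℕ → Bool := fun x => x = 2*i+1 || x = 2*i+2 with hp
  set q : ℕ → Bool := fun x => x = 2*j+1 || x = 2*j+2 with hq
  -- the p-part of s has length ≤ 1
  have hsp : (s.filter p).length ≤ 1 := by
    apply sub_pair (a := 2*i+2) (b := 2*i+1) (by omega)
    · have := hsi.filter p
      rwa [tauL_filter_own hi] at this
    · have := hsj.filter p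
      rwa [tauL_filter_other hi hij.symm] at this
  have hsq : (s.filter q).length ≤ 1 := by
    apply sub_pair (a := 2*j+1) (b := 2*j+2) (by omega)
    · have := hsi.filter q
      rwa [tauL_filter_other hj hij] at this
    · have := hsj.filter q
      rwa [tauL_filter_own hj] at this
  -- decomposition of lengths
  have hq_imp_np : ∀ x : ℕ, (fun x => !p x && q x) x = q x := by
    intro x
    by_cases h1 : x = 2*j+1 <;> by_cases h2 : x = 2*j+2 <;>
      simp [hp, hq, h1, h2] <;> omega
  have key : ∀ t : List ℕ, t.length = (t.filter p).length + (t.filter q).length +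
      (t.filter (fun x => !p x && !q x)).length := by
    intro t
    have d1 := List.length_eq_length_filter_add (l := t) p
    have d2 := List.length_eq_length_filter_add (l := t.filter (fun x => !p x)) q
    rw [List.filter_filter, List.filter_filter] at d2
    have e1 : List.filter (fun a => q a && !p a) t = List.filter q t := by
      apply List.filter_congr
      intro x _
      by_cases h1 : x = 2*j+1 <;> by_cases h2 : x = 2*j+2 <;>
        simp [hp, hq, h1, h2] <;> omega
    have e2 : List.filter (fun a => !q a && !p a) t
        = List.filter (fun x => !p x && !q x) t := by
      apply List.filter_congr
      intro x _
      exact Bool.and_comm _ _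
    rw [e1, e2] at d2
    omega
  -- length of the rest-part of tauL m i
  have hrest : ((tauL m i).filter (fun x => !p x && !q x)).length = 2*m - 4 := by
    have := key (tauL m i)
    rw [tauL_filter_own hi, tauL_filter_other hj hij] at this
    have hl : (tauL m i).length = 2*m := tauL_length
    simp only [List.length_cons, List.length_nil] at this
    omega
  have hsrest : (s.filter (fun x => !p x && !q x)).length ≤ 2*m - 4 := by
    have := (hsi.filter (fun x => !p x && !q x)).length_le
    omega
  have := key s
  have hm : 2 ≤ m := by omega
  omega

lemma LCS_id_tauL {m i : ℕ} (hi : i < m) :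
    2*m - 1 ≤ LCS (List.range' 1 (2*m)) (tauL m i) := by
  set w : List ℕ := List.range' 1 (2*i) ++ [2*i+1] ++ List.range' (2*i+3) (2*m - (2*i+2))
    with hw
  have hsplit := range'_split_pair (N := 2*m) (u := 2*i+1) (v := 2*i+2)
    (by omega) (by omega) (by omega)
  have h0 : (2*i+2) - (2*i+1) - 1 = 0 := by omega
  have h1 : (2*i+1) - 1 = 2*i := by omega
  rw [h0, h1] at hsplit
  simp only [List.range'_zero, List.append_nil] at hsplit
  have hsub1 : w.Sublist (List.range' 1 (2*m)) := by
    rw [hsplit, hw]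
    have : List.range' 1 (2*i) ++ [2*i+1] ++ [2*i+2] ++ List.range' (2*i+2+1) (2*m-(2*i+2))
        = (List.range' 1 (2*i) ++ [2*i+1]) ++ ((2*i+2) :: List.range' (2*i+3) (2*m-(2*i+2))) := by
      simp
    rw [this]
    exact (List.Sublist.refl _).append (List.sublist_cons_self _ _)
  have hsub2 : w.Sublist (tauL m i) := by
    rw [tauL_struct hi, hw]
    apply List.Sublist.append _ (List.Sublist.refl _)
    apply List.Sublist.append (List.Sublist.refl _)
    simp
  have := le_LCS hsub1 hsub2
  have hwl : w.length = 2*m - 1 := by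
    rw [hw]
    simp
    omega
  omega

lemma one_le_ulamDist {x y : List ℕ} (hl : x.length = y.length) (hne : x ≠ y) :
    1 ≤ ulamDist x y := by
  have h1 := LCS_le_length_left x y
  have h2 : LCS x y ≠ x.length := fun h => hne ((LCS_eq_length_iff hl).1 h)
  rw [ulamDist]
  omega

lemma shift_length (n : ℕ) (l : List ℕ) : (shift n l).length = l.length := by
  simp [shift]

lemma sum_ulam_tau {n m : ℕ} (hm : 2 ≤ m) {ρ : List ℕ}
    (hρ : ρ.Perm (List.range' (1+n) (2*m))) :
    m ≤ ∑ i : Fin m, ulamDist ρ (shift n (tauL m i.val)) := by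
  have hρl : ρ.length = 2*m := by simpa using hρ.length_eq
  have hsl : ∀ i : Fin m, (shift n (tauL m i.val)).length = 2*m := by
    intro i
    simp [shift, tauL]
  by_cases hex : ∃ j : Fin m, ρ = shift n (tauL m j.val)
  · obtain ⟨j, rfl⟩ := hex
    have hbound : ∀ i ∈ Finset.univ.erase j,
        2 ≤ ulamDist (shift n (tauL m j.val)) (shift n (tauL m i.val)) := by
      intro i hi
      have hij : i ≠ j := (Finset.mem_erase.1 hi).1
      have h1 : LCS (tauL m j.val) (tauL m i.val) ≤ 2*m - 2 :=
        LCS_tauL_tauL j.isLt i.isLt (fun h => hij (Fin.ext h.symm))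
      rw [ulamDist, hsl j, LCS_shift]
      omega
    have hc : (Finset.univ.erase j).card = m - 1 := by
      rw [Finset.card_erase_of_mem (Finset.mem_univ j)]
      simp
    calc m ≤ (m-1) * 2 := by omega
    _ = (Finset.univ.erase j).card • 2 := by rw [hc, smul_eq_mul]
    _ ≤ ∑ i ∈ Finset.univ.erase j, ulamDist (shift n (tauL m j.val)) (shift n (tauL m i.val)) :=
        Finset.card_nsmul_le_sum _ _ _ hbound
    _ ≤ ∑ i : Fin m, ulamDist (shift n (tauL m j.val)) (shift n (tauL m i.val)) :=
        Finset.sum_le_sum_of_subset (Finset.subset_univ _)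
  · push_neg at hex
    calc m = (Finset.univ : Finset (Fin m)).card • 1 := by simp
    _ ≤ ∑ i : Fin m, ulamDist ρ (shift n (tauL m i.val)) :=
        Finset.card_nsmul_le_sum _ _ _
          (fun i _ => one_le_ulamDist (by rw [hρl, hsl]) (hex i))

lemma shift_range' (n s l : ℕ) : shift n (List.range' s l) = List.range' (s+n) l := by
  rw [shift]
  have : (fun x : ℕ => x + n) = (fun x => n + x) := funext fun x => Nat.add_comm x n
  rw [this, List.map_add_range']
  congr 1
  omega

lemma ulamDist_self (x : List ℕ) : ulamDist x x = 0 := by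
  rw [ulamDist, (LCS_eq_length_iff rfl).2 rfl]
  omega


theorem multisets_to_sets (n m : ℕ) (π : Fin m → List ℕ)
    (hπ : ∀ i, IsPermOf n (π i))
    (τ : Fin m → List ℕ)
    (hτ : ∀ i : Fin m, τ i =
      (List.range' 1 (2 * m)).map (Equiv.swap (2 * i.val + 1) (2 * i.val + 2)))
    (k : ℕ) :
    (∃ πs : List ℕ, IsPermOf n πs ∧ ∑ i, ulamDist πs (π i) ≤ k) ↔
    (∃ πs' : List ℕ, IsPermOf (n + 2 * m) πs' ∧
      ∑ i, ulamDist πs' (π i ++ shift n (τ i)) ≤ k + m) := by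
  have hτ' : ∀ i : Fin m, τ i = tauL m i.val := fun i => hτ i
  have hτperm : ∀ i : Fin m, (τ i).Perm (List.range' 1 (2*m)) := fun i => by
    rw [hτ' i]; exact tauL_perm i.isLt
  have hπl : ∀ i, (π i).length = n := fun i => by simpa using (hπ i).length_eq
  constructor
  · rintro ⟨πs, hperm, hsum⟩
    refine ⟨πs ++ shift n (List.range' 1 (2*m)), ?_, ?_⟩
    · rw [IsPermOf, shift_range', range'_split 1 n (2*m)]
      exact hperm.append_right _
    · have hπsl : πs.length = n := by simpa using hperm.length_eq
      have hterm : ∀ i : Fin m,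
          ulamDist (πs ++ shift n (List.range' 1 (2*m))) (π i ++ shift n (τ i)) ≤
            ulamDist πs (π i) + 1 := by
        intro i
        have h1 := LCS_append_ge πs (π i) (shift n (List.range' 1 (2*m))) (shift n (τ i))
        rw [LCS_shift] at h1
        have h2 : 2*m - 1 ≤ LCS (List.range' 1 (2*m)) (τ i) := by
          rw [hτ' i]; exact LCS_id_tauL i.isLt
        have h3 : LCS πs (π i) ≤ n := (LCS_le_length_left _ _).trans (le_of_eq hπsl)
        rw [ulamDist, ulamDist, List.length_append, hπsl, shift_length,
          List.length_range']
        omega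
      calc ∑ i, ulamDist (πs ++ shift n (List.range' 1 (2*m))) (π i ++ shift n (τ i))
          ≤ ∑ i, (ulamDist πs (π i) + 1) := Finset.sum_le_sum (fun i _ => hterm i)
        _ = (∑ i, ulamDist πs (π i)) + m := by
            rw [Finset.sum_add_distrib]; simp
        _ ≤ k + m := by omega
  · rintro ⟨πs', hperm', hsum'⟩
    by_cases hm : m < 2
    · interval_cases m
      · exact ⟨List.range' 1 n, List.Perm.refl _, by simp⟩
      · refine ⟨π 0, hπ 0, ?_⟩
        have : ∑ i : Fin 1, ulamDist (π 0) (π i) = ulamDist (π 0) (π 0) := by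
          simp
        rw [this, ulamDist_self]
        omega
    · push_neg at hm
      set p : ℕ → Bool := fun x => decide (x ≤ n) with hp
      set σ := πs'.filter p with hσdef
      set ρ := πs'.filter (fun x => !p x) with hρdef
      have hsplit : List.range' 1 (n + 2*m) =
          List.range' 1 n ++ List.range' (1+n) (2*m) := range'_split 1 n (2*m)
      have e1 : (List.range' 1 n).filter p = List.range' 1 n :=
        List.filter_eq_self.2 (fun x hx => by
          rw [List.mem_range'_1] at hx; simp [hp]; omega)
      have e2 : (List.range' (1+n) (2*m)).filter p = [] :=
        List.filter_eq_nil_iff.2 (fun x hx => by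
          rw [List.mem_range'_1] at hx; simp [hp]; omega)
      have e1' : (List.range' 1 n).filter (fun x => !p x) = [] :=
        List.filter_eq_nil_iff.2 (fun x hx => by
          rw [List.mem_range'_1] at hx; simp [hp]; omega)
      have e2' : (List.range' (1+n) (2*m)).filter (fun x => !p x) = List.range' (1+n) (2*m) :=
        List.filter_eq_self.2 (fun x hx => by
          rw [List.mem_range'_1] at hx; simp [hp]; omega)
      have hσ : σ.Perm (List.range' 1 n) := by
        have := hperm'.filter p
        rwa [hsplit, List.filter_append, e1, e2, List.append_nil] at this
      have hρ : ρ.Perm (List.range' (1+n) (2*m)) := by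
        have := hperm'.filter (fun x => !p x)
        rwa [hsplit, List.filter_append, e1', e2', List.nil_append] at this
      have hσl : σ.length = n := by simpa using hσ.length_eq
      have hρl : ρ.length = 2*m := by simpa using hρ.length_eq
      have hπs'l : πs'.length = n + 2*m := by simpa using hperm'.length_eq
      have hterm : ∀ i : Fin m,
          ulamDist σ (π i) + ulamDist ρ (shift n (τ i)) ≤
            ulamDist πs' (π i ++ shift n (τ i)) := by
        intro i
        have hwp : (π i ++ shift n (τ i)).filter p = π i := by
          rw [List.filter_append]
          have f1 : (π i).filter p = π i :=
            List.filter_eq_self.2 (fun x hx => by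
              have hx' : x ∈ List.range' 1 n := (hπ i).mem_iff.1 hx
              rw [List.mem_range'_1] at hx'; simp [hp]; omega)
          have f2 : (shift n (τ i)).filter p = [] := by
            rw [List.filter_eq_nil_iff]
            intro x hx
            rw [shift, List.mem_map] at hx
            obtain ⟨y, hy, rfl⟩ := hx
            have hy' : y ∈ List.range' 1 (2*m) := (hτperm i).mem_iff.1 hy
            rw [List.mem_range'_1] at hy'; simp [hp]; omega
          rw [f1, f2, List.append_nil]
        have hwq : (π i ++ shift n (τ i)).filter (fun x => !p x) = shift n (τ i) := by
          rw [List.filter_append]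
          have f1 : (π i).filter (fun x => !p x) = [] :=
            List.filter_eq_nil_iff.2 (fun x hx => by
              have hx' : x ∈ List.range' 1 n := (hπ i).mem_iff.1 hx
              rw [List.mem_range'_1] at hx'; simp [hp]; omega)
          have f2 : (shift n (τ i)).filter (fun x => !p x) = shift n (τ i) := by
            rw [List.filter_eq_self]
            intro x hx
            rw [shift, List.mem_map] at hx
            obtain ⟨y, hy, rfl⟩ := hx
            have hy' : y ∈ List.range' 1 (2*m) := (hτperm i).mem_iff.1 hy
            rw [List.mem_range'_1] at hy'; simp [hp]; omega
          rw [f1, f2, List.nil_append]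
        have hL := LCS_le_filter πs' (π i ++ shift n (τ i)) p
        rw [hwp, hwq, ← hσdef, ← hρdef] at hL
        have l1 : LCS σ (π i) ≤ n := (LCS_le_length_left _ _).trans (le_of_eq hσl)
        have l2 : LCS ρ (shift n (τ i)) ≤ 2*m :=
          (LCS_le_length_left _ _).trans (le_of_eq hρl)
        rw [ulamDist, ulamDist, ulamDist, hσl, hρl, hπs'l]
        omega
      have hsum2 : (∑ i, ulamDist σ (π i)) + (∑ i, ulamDist ρ (shift n (τ i))) ≤ k + m := by
        rw [← Finset.sum_add_distrib]
        exact le_trans (Finset.sum_le_sum fun i _ => hterm i) hsum'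
      have htau : m ≤ ∑ i, ulamDist ρ (shift n (τ i)) := by
        have := sum_ulam_tau (n := n) hm hρ
        have e : ∀ i : Fin m, shift n (tauL m i.val) = shift n (τ i) := fun i => by
          rw [hτ' i]
        simpa [e] using this
      exact ⟨σ, hσ, by omega⟩
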